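/- Let δ be an m×r binary matrix with unordered GLT structure with pivot rows l_1, …, l_r, and for each j let z_j denote the rank of l_j in the increasingly ordered sequence l_(1) < ⋯ < l_(r) of pivots. If δ satisfies the 3579 counting rule CR(r,1), then condition GLT-AR holds: l_j ≤ m − 2(r − z_j + 1) for every j = 1,…,r. In particular, GLT-AR is a necessary condition for CR(r,1), and for sparse GLT structures it is necessary for the row deletion property. -/

import Mathlib

open Matrix

/-- The counting rule `CR(r,s)`: every submatrix formed by a nonempty set `S` of
columns has at least `2 * |S| + s` nonzero rows. -/
def CR {I : Type*} [Fintype I] {r : ℕ} (δ : Matrix I (Fin r) Bool) (s : ℕ) : Prop :=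
  ∀ S : Finset (Fin r), S.Nonempty →
    2 * S.card + s ≤ (@Finset.filter I (fun i : I => ∃ j ∈ S, δ i j = true) (fun i => inferInstance)
      Finset.univ).card

/-- Necessity of condition GLT-AR: let `δ` be a binary matrix with unordered GLT
structure with pairwise distinct pivot rows `l j`, and for each `j` let `z j` be
the (1-based) rank of `l j` among the ordered pivots, i.e. the number of indices
`i` with `l i ≤ l j`. If `δ` satisfies the 3579 counting rule `CR(r,1)`, then
`l_j ≤ m − 2(r − z_j + 1)` holds for all `j` (in 1-based row indexing, i.e.
`(l j) + 1 ≤ m − 2(r − z j + 1)` for 0-based `l j`). -/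
theorem counting_rule_implies_GLT_AR {m r : ℕ}
    (δ : Matrix (Fin m) (Fin r) Bool)
    (l : Fin r → Fin m) (hinj : Function.Injective l)
    (hpiv : ∀ j : Fin r, δ (l j) j = true ∧ ∀ i : Fin m, i < l j → δ i j = false)
    (hcr : CR δ 1) :
    ∀ j : Fin r,
      (l j : ℕ) + 1 ≤
        m - 2 * (r - (Finset.univ.filter fun i : Fin r => l i ≤ l j).card + 1) := by
  intro j
  set Z : Finset (Fin r) := Finset.univ.filter fun i : Fin r => l i ≤ l j with hZ
  set A : Finset (Fin r) := Finset.univ.filter fun i : Fin r => l j ≤ l i with hA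
  -- A ∪ Z = univ, A ∩ Z = {j}
  have hunion : A ∪ Z = Finset.univ := by
    ext i
    simp only [hA, hZ, Finset.mem_union, Finset.mem_filter, Finset.mem_univ, true_and,
      iff_true]
    exact le_total (l j) (l i)
  have hinter : A ∩ Z = {j} := by
    ext i
    simp only [hA, hZ, Finset.mem_inter, Finset.mem_filter, Finset.mem_univ, true_and,
      Finset.mem_singleton]
    constructor
    · rintro ⟨h1, h2⟩
      exact hinj (le_antisymm h2 h1)
    · rintro rfl; exact ⟨le_rfl, le_rfl⟩
  have hcardsum : A.card + Z.card = r + 1 := by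
    have := Finset.card_union_add_card_inter A Z
    rw [hunion, hinter] at this
    simpa using this.symm
  have hZle : Z.card ≤ r := by simpa using Finset.card_le_card (Finset.subset_univ Z)
  -- CR applied to A
  have hAne : A.Nonempty := ⟨j, by simp [hA]⟩
  have hcrA := hcr A hAne
  -- the nonzero rows are all ≥ l j
  have hsub : (@Finset.filter (Fin m) (fun i : Fin m => ∃ k ∈ A, δ i k = true)
      (fun i => inferInstance) Finset.univ) ⊆
      Finset.Ici (l j) := by
    intro i hi
    simp only [Finset.mem_filter, Finset.mem_univ, true_and] at hi
    obtain ⟨k, hk, hik⟩ := hi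
    simp only [hA, Finset.mem_filter, Finset.mem_univ, true_and] at hk
    have : ¬ i < l k := fun h => by simp [(hpiv k).2 i h] at hik
    exact Finset.mem_Ici.mpr (le_trans hk (not_lt.mp this))
  have hcard : (@Finset.filter (Fin m) (fun i : Fin m => ∃ k ∈ A, δ i k = true)
      (fun i => inferInstance) Finset.univ).card ≤
      m - (l j : ℕ) := by
    have := Finset.card_le_card hsub
    rwa [Fin.card_Ici] at this
  have hmain : 2 * A.card + 1 ≤ m - (l j : ℕ) := le_trans hcrA hcard
  have hlt : (l j : ℕ) < m := (l j).isLt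
  omega
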